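/- Existence of supporting personalized prices (Theorem 2(a) / Claim 5): suppose in addition that each u_i is differentiable on ℝ^{R_i}. If a* is a feasible action profile that maximizes Σ_{i∈N} u_i((a_j)_{j∈R_i}) over all feasible action profiles, then there exist real numbers l*_{ij} (one for each i ∈ N and j ∈ R_i) such that Σ_{k∈C_j} l*_{kj} = 0 for every j ∈ N, and for every i ∈ N the restriction (a*_j)_{j∈R_i} maximizes the map ā ↦ −Σ_{j∈R_i} l*_{ij}·ā_j + u_i(ā) over all ā : R_i → ℝ with ā_i ∈ A_i (and ā_j ∈ ℝ unconstrained for j ∈ R_i \ {i}). -/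

import Mathlib

open Finset

/-- The set `C_j` of users affected by `j`: those `k` with `j ∈ R k`. -/
def affected {N : Type*} [Fintype N] [DecidableEq N] (R : N → Finset N) (j : N) : Finset N :=
  Finset.univ.filter (fun k => j ∈ R k)

/-- The action `â_j(m)` assigned to user `j` by the mechanism. -/
noncomputable def ahat {N : Type*} [Fintype N] [DecidableEq N] (R : N → Finset N)
    (a : N → N → ℝ) (j : N) : ℝ :=
  (∑ k ∈ affected R j, a k j) / ((affected R j).card : ℝ)

/-- The personalized price `l_{ij}(m)` of user `i` for the action of `j`. -/
def price {N : Type*} (σ : N → N → N) (π : N → N → ℝ) (i j : N) : ℝ :=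
  π (σ j i) j - π (σ j (σ j i)) j

/-- The tax `t̂_i(m)` of user `i`. -/
noncomputable def tax {N : Type*} [Fintype N] [DecidableEq N] (R : N → Finset N)
    (σ : N → N → N) (a π : N → N → ℝ) (i : N) : ℝ :=
  ∑ j ∈ R i,
    (price σ π i j * ahat R a j
      + π i j * (a i j - a (σ j i) j) ^ 2
      - π (σ j i) j * (a (σ j i) j - a (σ j (σ j i)) j) ^ 2)

open Classical in
/-- User `i`'s payoff (valued in `EReal`) at the message profile `(a, π)`. -/
noncomputable def payoff {N : Type*} [Fintype N] [DecidableEq N] (R : N → Finset N)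
    (σ : N → N → N) (A : N → Set ℝ) (u : ∀ i : N, (↥(R i) → ℝ) → ℝ)
    (a π : N → N → ℝ) (i : N) : EReal :=
  if ahat R a i ∈ A i then
    (((- tax R σ a π i + u i fun j => ahat R a j.1) : ℝ) : EReal)
  else ⊥

/-- `(a, π)` is a Nash equilibrium of the game induced by the mechanism and the payoffs. -/
def IsNE {N : Type*} [Fintype N] [DecidableEq N] (R : N → Finset N)
    (σ : N → N → N) (A : N → Set ℝ) (u : ∀ i : N, (↥(R i) → ℝ) → ℝ)
    (a π : N → N → ℝ) : Prop :=
  (∀ i, ∀ j ∈ R i, 0 ≤ π i j) ∧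
  ∀ (i : N) (a' π' : N → ℝ), (∀ j ∈ R i, 0 ≤ π' j) →
    payoff R σ A u (Function.update a i a') (Function.update π i π') i ≤
      payoff R σ A u a π i


section Aux

variable {E : Type*} [NormedAddCommGroup E] [NormedSpace ℝ E]

/-- One-sided first-order condition: if `φ t ≤ φ 0` on `(0,1)` then `φ'(0) ≤ 0`. -/
lemma deriv_nonpos_of_le_zero {φ : ℝ → ℝ} {δ : ℝ} (hφ : HasDerivAt φ δ 0)
    (h : ∀ t ∈ Set.Ioo (0:ℝ) 1, φ t ≤ φ 0) : δ ≤ 0 := by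
  rw [hasDerivAt_iff_tendsto_slope] at hφ
  have hsub : Set.Ioi (0:ℝ) ⊆ {(0:ℝ)}ᶜ := fun t ht => by
    simpa using ne_of_gt ht
  have hφ' := hφ.mono_left (nhdsWithin_mono 0 hsub)
  refine le_of_tendsto hφ' ?_
  filter_upwards [Ioo_mem_nhdsGT_of_mem (Set.mem_Ico.2 ⟨le_refl (0:ℝ), zero_lt_one⟩)] with t ht
  rw [slope_def_field]
  exact div_nonpos_of_nonpos_of_nonneg (by linarith [h t ht]) (by linarith [ht.1])

/-- Gradient inequality for concave differentiable functions. -/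
lemma concave_le_add_fderiv {f : E → ℝ} (hf : ConcaveOn ℝ Set.univ f)
    (hd : Differentiable ℝ f) (x y : E) :
    f y ≤ f x + fderiv ℝ f x (y - x) := by
  set g : ℝ → ℝ := fun t => f (AffineMap.lineMap x y t) with hgdef
  have hgc : ConcaveOn ℝ Set.univ g := by
    have h := hf.comp_affineMap (AffineMap.lineMap x y : ℝ →ᵃ[ℝ] E)
    simpa [hgdef, Function.comp_def, Set.preimage_univ] using h
  have hpath : HasDerivAt (fun t : ℝ => AffineMap.lineMap x y t) (y - x) 0 := by
    have h1 : HasDerivAt (fun t : ℝ => t • (y - x) + x) (y - x) 0 := by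
      simpa using ((hasDerivAt_id (0:ℝ)).smul_const (y - x)).add_const x
    simpa [AffineMap.lineMap_apply_module'] using h1
  have hgd : HasDerivAt g (fderiv ℝ f x (y - x)) 0 := by
    have h2 : HasFDerivAt f (fderiv ℝ f x) ((AffineMap.lineMap x y : ℝ →ᵃ[ℝ] E) (0:ℝ)) := by
      rw [AffineMap.lineMap_apply_zero]; exact (hd x).hasFDerivAt
    exact h2.comp_hasDerivAt 0 hpath
  have key : g 1 - g 0 ≤ fderiv ℝ f x (y - x) := by
    rw [hasDerivAt_iff_tendsto_slope] at hgd
    have hsub : Set.Ioi (0:ℝ) ⊆ {(0:ℝ)}ᶜ := fun t ht => by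
      simpa using ne_of_gt ht
    have hgd' := hgd.mono_left (nhdsWithin_mono 0 hsub)
    refine ge_of_tendsto hgd' ?_
    filter_upwards [Ioo_mem_nhdsGT_of_mem (Set.mem_Ico.2 ⟨le_refl (0:ℝ), zero_lt_one⟩)] with t ht
    rw [slope_def_field]
    have hsec := (hgc.neg).secant_mono (a := 0) (x := t) (y := 1)
      (Set.mem_univ _) (Set.mem_univ _) (Set.mem_univ _)
      (ne_of_gt ht.1) one_ne_zero (le_of_lt ht.2)
    simp only [Pi.neg_apply, sub_zero] at hsec
    have ht0 : (0:ℝ) < t := ht.1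
    rw [div_one, div_le_iff₀ ht0] at hsec
    rw [sub_zero, le_div_iff₀ ht0]
    linarith
  have hg1 : g 1 = f y := by simp [hgdef]
  have hg0 : g 0 = f x := by simp [hgdef]
  rw [hg1, hg0] at key
  linarith

/-- `Pi.single` with value `c` is `c` times `Pi.single` with value `1`. -/
lemma pi_single_eq_smul_single {ι : Type*} [DecidableEq ι] (a : ι) (c : ℝ) :
    (Pi.single a c : ι → ℝ) = c • (Pi.single a (1:ℝ) : ι → ℝ) := by
  funext x
  by_cases h : x = a <;> simp [Pi.single_apply, h]

end Aux

/-- Existence of supporting personalized prices (Theorem 2(a) / Claim 5). -/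
theorem exists_supporting_prices
    {N : Type*} [Fintype N] [DecidableEq N]
    (R : N → Finset N)
    (hR : ∀ i, i ∈ R i)
    (hC3 : ∀ j, 3 ≤ (affected R j).card)
    (A : N → Set ℝ)
    (hA0 : ∀ i, (0 : ℝ) ∈ A i) (hAconv : ∀ i, Convex ℝ (A i)) (hAcomp : ∀ i, IsCompact (A i))
    (u : ∀ i : N, (↥(R i) → ℝ) → ℝ)
    (hu : ∀ i, ConcaveOn ℝ Set.univ (u i))
    (hdiff : ∀ i, Differentiable ℝ (u i))
    (astar : N → ℝ)
    (hfeas : ∀ i, astar i ∈ A i)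
    (hopt : ∀ b : N → ℝ, (∀ i, b i ∈ A i) →
      ∑ i, u i (fun j => b j.1) ≤ ∑ i, u i (fun j => astar j.1)) :
    ∃ l : N → N → ℝ,
      (∀ j : N, ∑ k ∈ affected R j, l k j = 0) ∧
      ∀ i : N, ∀ abar : ↥(R i) → ℝ, abar ⟨i, hR i⟩ ∈ A i →
        - (∑ j : ↥(R i), l i j.1 * abar j) + u i abar ≤
          - (∑ j : ↥(R i), l i j.1 * astar j.1) + u i (fun j => astar j.1) := by
  classical
  set D : ∀ i : N, ((↥(R i) → ℝ) →L[ℝ] ℝ) :=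
    fun i => fderiv ℝ (u i) (fun j : ↥(R i) => astar j.1) with hD
  set d : N → N → ℝ :=
    fun i j => if h : j ∈ R i then D i (Pi.single (⟨j, h⟩ : ↥(R i)) 1) else 0 with hd
  set S : N → ℝ := fun j => ∑ k ∈ affected R j, d k j with hS
  -- linearity of `D i`
  have hlin : ∀ (i : N) (v : ↥(R i) → ℝ),
      D i v = ∑ j : ↥(R i), v j * D i (Pi.single j 1) := by
    intro i v
    conv_lhs => rw [← Finset.univ_sum_single v]
    rw [map_sum]
    refine Finset.sum_congr rfl fun j _ => ?_
    rw [pi_single_eq_smul_single, map_smul, smul_eq_mul]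
  -- first-order optimality condition
  have hstar : ∀ i : N, ∀ x ∈ A i, S i * (x - astar i) ≤ 0 := by
    intro i x hx
    set c : ℝ := x - astar i with hc
    set e : N → ℝ := Pi.single i c with he
    set v : ∀ k : N, (↥(R k) → ℝ) := fun k => fun j => e j.1 with hv
    set q : ∀ k : N, ℝ → (↥(R k) → ℝ) :=
      fun k t => (fun j : ↥(R k) => astar j.1) + t • v k with hq
    have hq0 : ∀ k, q k 0 = fun j : ↥(R k) => astar j.1 := by
      intro k; simp [hq]
    have hderiv : ∀ k : N, HasDerivAt (fun t => u k (q k t)) (D k (v k)) 0 := by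
      intro k
      have h1 : HasDerivAt (q k) (v k) 0 := by
        simp only [hq]
        simpa using (((hasDerivAt_id (0:ℝ)).smul_const (v k)).const_add
          (fun j : ↥(R k) => astar j.1))
      have h2 : HasFDerivAt (u k) (D k) (q k 0) := by
        rw [hq0 k, hD]; exact (hdiff k _).hasFDerivAt
      exact h2.comp_hasDerivAt 0 h1
    have hφ : HasDerivAt (fun t => ∑ k, u k (q k t)) (∑ k, D k (v k)) 0 :=
      HasDerivAt.fun_sum (fun k _ => hderiv k)
    have hle : ∀ t ∈ Set.Ioo (0:ℝ) 1,
        (∑ k, u k (q k t)) ≤ ∑ k, u k (q k 0) := by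
      intro t ht
      have hfeas' : ∀ m, (astar m + t * e m) ∈ A m := by
        intro m
        by_cases hm : m = i
        · subst hm
          have hmem := hAconv m (hfeas m) hx
            (by linarith [ht.2] : (0:ℝ) ≤ 1 - t) (le_of_lt ht.1) (by ring)
          have hexp : astar m + t * e m = (1 - t) • astar m + t • x := by
            simp only [he, Pi.single_eq_same, smul_eq_mul, hc]; ring
          rw [hexp]; exact hmem
        · have : e m = 0 := by
            show (Pi.single i c : N → ℝ) m = 0
            exact Pi.single_eq_of_ne (M := fun _ : N => ℝ) hm c
          rw [this, mul_zero, add_zero]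
          exact hfeas m
      have heq : ∀ k, q k t = fun j : ↥(R k) => astar j.1 + t * e j.1 := by
        intro k; funext j
        simp [hq, hv, Pi.add_apply, Pi.smul_apply, smul_eq_mul]
      have h1 : (∑ k, u k (q k t)) = ∑ k, u k (fun j : ↥(R k) => astar j.1 + t * e j.1) :=
        Finset.sum_congr rfl fun k _ => by rw [heq k]
      have h0 : (∑ k, u k (q k 0)) = ∑ k, u k (fun j : ↥(R k) => astar j.1) :=
        Finset.sum_congr rfl fun k _ => by rw [hq0 k]
      rw [h1, h0]
      exact hopt (fun m => astar m + t * e m) hfeas'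
    have hδ : (∑ k, D k (v k)) ≤ 0 := deriv_nonpos_of_le_zero hφ hle
    have hval : ∀ k : N, D k (v k) = if i ∈ R k then c * d k i else 0 := by
      intro k
      by_cases h : i ∈ R k
      · have hvk : v k = Pi.single (⟨i, h⟩ : ↥(R k)) c := by
          funext j
          simp [hv, he, Pi.single_apply, Subtype.ext_iff]
        have hdk : d k i = D k (Pi.single (⟨i, h⟩ : ↥(R k)) 1) := by
          simp only [hd]; rw [dif_pos h]
        rw [if_pos h, hvk, pi_single_eq_smul_single, map_smul, smul_eq_mul, hdk]
      · have hvk : v k = 0 := by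
          funext j
          show (Pi.single i c : N → ℝ) j.1 = 0
          exact Pi.single_eq_of_ne (M := fun _ : N => ℝ) (fun (hji : (j : N) = i) => h (hji ▸ j.2)) c
        rw [if_neg h, hvk, map_zero]
    have hsum : (∑ k, D k (v k)) = S i * c := by
      rw [Finset.sum_congr rfl (fun k _ => hval k), ← Finset.sum_filter, ← Finset.mul_sum]
      have hfil : Finset.univ.filter (fun k => i ∈ R k) = affected R i := rfl
      rw [hfil, hS, mul_comm]
    rw [hsum] at hδ
    exact hδ
  -- the prices
  set l : N → N → ℝ := fun k j => if k = j then d j j - S j else d k j with hl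
  refine ⟨l, ?_, ?_⟩
  · intro j
    have hjj : j ∈ affected R j := by
      simp [affected, hR j]
    have hsplit : ∀ k ∈ affected R j, l k j = d k j - (if k = j then S j else 0) := by
      intro k _
      by_cases h : k = j <;> simp [hl, h]
    rw [Finset.sum_congr rfl hsplit, Finset.sum_sub_distrib,
      Finset.sum_ite_eq' _ j (fun _ => S j), if_pos hjj, hS]
    exact sub_self _
  · intro i abar habar
    set w : ↥(R i) → ℝ := abar - (fun j : ↥(R i) => astar j.1) with hw
    have hgrad := concave_le_add_fderiv (hu i) (hdiff i) (fun j : ↥(R i) => astar j.1) abar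
    have hDw : D i (abar - (fun j : ↥(R i) => astar j.1)) = ∑ j : ↥(R i), d i j.1 * w j := by
      rw [← hw, hlin i w]
      refine Finset.sum_congr rfl fun j _ => ?_
      have hdij : d i j.1 = D i (Pi.single j 1) := by
        simp only [hd]; rw [dif_pos j.2, Subtype.coe_eta]
      rw [hdij]; ring
    have hkey : ∑ j : ↥(R i), (d i j.1 - l i j.1) * w j = S i * w ⟨i, hR i⟩ := by
      have hterm : ∀ j : ↥(R i), (d i j.1 - l i j.1) * w j
          = if j = (⟨i, hR i⟩ : ↥(R i)) then S i * w j else 0 := by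
        intro j
        by_cases h : j = (⟨i, hR i⟩ : ↥(R i))
        · have hji : (j : N) = i := by rw [h]
          have hlv : l i j.1 = d i i - S i := by rw [hji]; simp [hl]
          have hdv : d i j.1 = d i i := by rw [hji]
          rw [if_pos h, hlv, hdv]
          ring
        · have hji : ¬ (i = j.1) := fun hcc => h (Subtype.ext hcc.symm)
          rw [if_neg h]
          simp only [hl, if_neg hji]
          ring
      rw [Finset.sum_congr rfl (fun j _ => hterm j),
        Finset.sum_ite_eq' Finset.univ (⟨i, hR i⟩ : ↥(R i)) (fun j => S i * w j),
        if_pos (Finset.mem_univ _)]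
    have hw_i : w ⟨i, hR i⟩ = abar ⟨i, hR i⟩ - astar i := by
      rw [hw]; simp
    have hfinal : S i * (abar ⟨i, hR i⟩ - astar i) ≤ 0 := hstar i _ habar
    have hsum_split : (∑ j : ↥(R i), l i j.1 * abar j) - (∑ j : ↥(R i), l i j.1 * astar j.1)
        = ∑ j : ↥(R i), l i j.1 * w j := by
      rw [← Finset.sum_sub_distrib]
      refine Finset.sum_congr rfl fun j _ => ?_
      rw [hw]; simp [mul_sub]
    have h1 : u i abar ≤ u i (fun j : ↥(R i) => astar j.1) + ∑ j : ↥(R i), d i j.1 * w j := by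
      rw [← hDw]; simp only [hD]; exact hgrad
    have h2 : (∑ j : ↥(R i), d i j.1 * w j) - (∑ j : ↥(R i), l i j.1 * w j)
        = S i * (abar ⟨i, hR i⟩ - astar i) := by
      rw [← hw_i, ← hkey, ← Finset.sum_sub_distrib]
      exact Finset.sum_congr rfl fun j _ => by ring
    linarith [hsum_split, h1, h2, hfinal]
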